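/- The quartic F = x₀⁴ + x₁⁴ + x₂⁴ + (x₀+x₁+x₂)⁴ + (x₀−x₁+x₂)⁴ has middle catalecticant α_{2,F} of rank exactly 5; in particular its 6×6 catalecticant determinant vanishes. -/

import Mathlib

open MvPolynomial

/-- The differential operator on `MvPolynomial σ ℂ` given by the monomial with
exponent vector `m`: the composite of `m i`-fold partial derivatives in each variable `i`. -/
noncomputable def diffOpMon {σ : Type*} [Fintype σ] [DecidableEq σ] (m : σ →₀ ℕ) :
    Module.End ℂ (MvPolynomial σ ℂ) :=
  (m.toMultiset.toList.map fun i => (pderiv i).toLinearMap).prod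

/-- `diffOp D F` is the result of applying the polynomial `D` (in the dual variables)
to `F` as a constant-coefficient differential operator (apolarity action). -/
noncomputable def diffOp {σ : Type*} [Fintype σ] [DecidableEq σ]
    (D F : MvPolynomial σ ℂ) : MvPolynomial σ ℂ :=
  ∑ m ∈ D.support, D.coeff m • diffOpMon m F

/-- The rank of the `k`-th catalecticant of `F`: the dimension of the space spanned by all
`D(∂)F` for `D` homogeneous of degree `k`. -/
noncomputable def cataRank {σ : Type*} [Fintype σ] [DecidableEq σ]
    (k : ℕ) (F : MvPolynomial σ ℂ) : ℕ :=
  Module.finrank ℂ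
    (Submodule.span ℂ ((fun D => diffOp D F) '' {D : MvPolynomial σ ℂ | D.IsHomogeneous k}))

/- ### auxiliary lemmas -/


lemma pd_comm {σ : Type*} [DecidableEq σ] (i j : σ) (f : MvPolynomial σ ℂ) :
    pderiv i (pderiv j f) = pderiv j (pderiv i f) := by
  induction f using MvPolynomial.induction_on' with
  | add p q hp hq => simp [hp, hq]
  | monomial s a =>
    rcases eq_or_ne i j with rfl | hij
    · rfl
    · simp only [pderiv_monomial]
      rw [Finsupp.tsub_apply, Finsupp.tsub_apply,
        Finsupp.single_eq_of_ne hij, Finsupp.single_eq_of_ne (Ne.symm hij)]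
      simp only [Nat.sub_zero]
      rw [tsub_right_comm]
      congr 1
      ring

lemma pd_commute {σ : Type*} [DecidableEq σ] (i j : σ) :
    Commute (pderiv i (R := ℂ) (σ := σ)).toLinearMap (pderiv j).toLinearMap :=
  LinearMap.ext fun f => pd_comm i j f

lemma pairwise_comm {σ : Type*} [DecidableEq σ] (l : List σ) :
    (l.map fun i => (pderiv i (R := ℂ)).toLinearMap).Pairwise Commute := by
  rw [List.pairwise_map]
  induction l with
  | nil => exact List.Pairwise.nil
  | cons a l ih => exact List.Pairwise.cons (fun b _ => pd_commute a b) ih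

lemma diffOpMon_eq_list {σ : Type*} [Fintype σ] [DecidableEq σ] (m : σ →₀ ℕ)
    (l : List σ) (hl : (l : Multiset σ) = m.toMultiset) :
    diffOpMon m = (l.map fun i => (pderiv i).toLinearMap).prod := by
  have hperm : List.Perm m.toMultiset.toList l := by
    rw [← Multiset.coe_eq_coe, Multiset.coe_toList, hl]
  unfold diffOpMon
  exact (hperm.map _).prod_eq' (pairwise_comm _)

lemma diffOpMon_pair {σ : Type*} [Fintype σ] [DecidableEq σ] (i j : σ)
    (F : MvPolynomial σ ℂ) :
    diffOpMon (Finsupp.single i 1 + Finsupp.single j 1) F = pderiv i (pderiv j F) := by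
  rw [diffOpMon_eq_list _ [i, j]]
  · simp [Module.End.mul_apply]
  · simp [Finsupp.toMultiset_add, Finsupp.toMultiset_single]
    rfl

lemma diffOpMon_two {σ : Type*} [Fintype σ] [DecidableEq σ] (i : σ)
    (F : MvPolynomial σ ℂ) :
    diffOpMon (Finsupp.single i 2) F = pderiv i (pderiv i F) := by
  rw [show (2:ℕ) = 1 + 1 from rfl, Finsupp.single_add]
  exact diffOpMon_pair i i F

lemma diffOp_monomial {σ : Type*} [Fintype σ] [DecidableEq σ] (m : σ →₀ ℕ)
    (F : MvPolynomial σ ℂ) :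
    diffOp (monomial m 1) F = diffOpMon m F := by
  unfold diffOp
  simp [support_monomial, coeff_monomial]

lemma fin3_decomp (m : Fin 3 →₀ ℕ) :
    m = Finsupp.single 0 (m 0) + Finsupp.single 1 (m 1) + Finsupp.single 2 (m 2) := by
  ext i
  fin_cases i <;> simp [Finsupp.single_apply]

lemma deg3 (m : Fin 3 →₀ ℕ) : m.degree = m 0 + m 1 + m 2 := by
  rw [Finsupp.degree_apply,
    Finset.sum_subset (Finset.subset_univ _)
      (fun x _ hx => Finsupp.notMem_support_iff.mp hx),
    Fin.sum_univ_three]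

/- ### the Clebsch quartic and its second derivatives -/

noncomputable abbrev Fq : MvPolynomial (Fin 3) ℂ :=
  (X 0) ^ 4 + (X 1) ^ 4 + (X 2) ^ 4 + (X 0 + X 1 + X 2) ^ 4 + (X 0 - X 1 + X 2) ^ 4

noncomputable abbrev vB : Fin 5 → MvPolynomial (Fin 3) ℂ :=
  ![X 0 ^ 2, X 1 ^ 2, X 2 ^ 2, X 0 * X 2, X 0 * X 1 + X 1 * X 2]

lemma pd_ofNat (i : Fin 3) : pderiv i (4 : MvPolynomial (Fin 3) ℂ) = 0 := by
  have : (4 : MvPolynomial (Fin 3) ℂ) = ((4 : ℕ) : MvPolynomial (Fin 3) ℂ) := by norm_num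
  rw [this, Derivation.map_natCast]

lemma d00 : pderiv 0 (pderiv 0 Fq) =
    (36:ℂ) • vB 0 + (24:ℂ) • vB 1 + (24:ℂ) • vB 2 + (48:ℂ) • vB 3 := by
  simp [pderiv_pow, pderiv_X, pd_ofNat, smul_eq_C_mul, map_ofNat]
  ring

lemma d11 : pderiv 1 (pderiv 1 Fq) =
    (24:ℂ) • vB 0 + (36:ℂ) • vB 1 + (24:ℂ) • vB 2 + (48:ℂ) • vB 3 := by
  simp [pderiv_pow, pderiv_X, pd_ofNat, smul_eq_C_mul, map_ofNat]
  ring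

lemma d22 : pderiv 2 (pderiv 2 Fq) =
    (24:ℂ) • vB 0 + (24:ℂ) • vB 1 + (36:ℂ) • vB 2 + (48:ℂ) • vB 3 := by
  simp [pderiv_pow, pderiv_X, pd_ofNat, smul_eq_C_mul, map_ofNat]
  ring

lemma d02 : pderiv 0 (pderiv 2 Fq) =
    (24:ℂ) • vB 0 + (24:ℂ) • vB 1 + (24:ℂ) • vB 2 + (48:ℂ) • vB 3 := by
  simp [pderiv_pow, pderiv_X, pd_ofNat, smul_eq_C_mul, map_ofNat]
  ring

lemma d01 : pderiv 0 (pderiv 1 Fq) = (48:ℂ) • vB 4 := by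
  simp [pderiv_pow, pderiv_X, pd_ofNat, smul_eq_C_mul, map_ofNat]
  ring

lemma d12 : pderiv 1 (pderiv 2 Fq) = (48:ℂ) • vB 4 := by
  simp [pderiv_pow, pderiv_X, pd_ofNat, smul_eq_C_mul, map_ofNat]
  ring

noncomputable abbrev Tset : Set (MvPolynomial (Fin 3) ℂ) :=
  (fun D => diffOp D Fq) '' {D : MvPolynomial (Fin 3) ℂ | D.IsHomogeneous 2}

lemma hvmem (k : Fin 5) : vB k ∈ Submodule.span ℂ (Set.range vB) :=
  Submodule.subset_span ⟨k, rfl⟩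

lemma combo_mem (c0 c1 c2 c3 : ℂ) :
    c0 • vB 0 + c1 • vB 1 + c2 • vB 2 + c3 • vB 3 ∈ Submodule.span ℂ (Set.range vB) :=
  add_mem (add_mem (add_mem (Submodule.smul_mem _ _ (hvmem 0))
    (Submodule.smul_mem _ _ (hvmem 1))) (Submodule.smul_mem _ _ (hvmem 2)))
    (Submodule.smul_mem _ _ (hvmem 3))

lemma mem_of_deg2 (m : Fin 3 →₀ ℕ) (hm : m.degree = 2) :
    diffOpMon m Fq ∈ Submodule.span ℂ (Set.range vB) := by
  have hd : m 0 + m 1 + m 2 = 2 := by rw [← deg3, hm]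
  have hrep := fin3_decomp m
  set a := m 0 with ha
  set b := m 1 with hb
  set c := m 2 with hc
  clear_value a b c
  have ha2 : a ≤ 2 := by omega
  have hb2 : b ≤ 2 := by omega
  have hc2 : c ≤ 2 := by omega
  rw [hrep]
  interval_cases a <;> interval_cases b <;> interval_cases c <;>
      (try simp only [Finsupp.single_zero, zero_add, add_zero]) <;>
    first
    | (exfalso; omega)
    | (rw [diffOpMon_two 0, d00]; exact combo_mem _ _ _ _)
    | (rw [diffOpMon_two 1, d11]; exact combo_mem _ _ _ _)
    | (rw [diffOpMon_two 2, d22]; exact combo_mem _ _ _ _)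
    | (rw [diffOpMon_pair 0 1, d01]; exact Submodule.smul_mem _ _ (hvmem 4))
    | (rw [diffOpMon_pair 0 2, d02]; exact combo_mem _ _ _ _)
    | (rw [diffOpMon_pair 1 2, d12]; exact Submodule.smul_mem _ _ (hvmem 4))

lemma spanT_le : Submodule.span ℂ Tset ≤ Submodule.span ℂ (Set.range vB) := by
  rw [Submodule.span_le]
  rintro x ⟨D, hD, rfl⟩
  show diffOp D Fq ∈ _
  unfold diffOp
  refine Submodule.sum_mem _ fun m hmsup => ?_
  refine Submodule.smul_mem _ _ (mem_of_deg2 m ?_)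
  rw [Finsupp.degree_eq_weight_one]
  exact hD (mem_support_iff.mp hmsup)

lemma q_mem (i j : Fin 3) : pderiv i (pderiv j Fq) ∈ Tset := by
  refine ⟨monomial (Finsupp.single i 1 + Finsupp.single j 1) 1, ?_, ?_⟩
  · refine isHomogeneous_monomial _ ?_
    rw [deg3]
    fin_cases i <;> fin_cases j <;>
      simp [Finsupp.add_apply, Finsupp.single_apply]
  · simp only
    rw [diffOp_monomial, diffOpMon_pair]

lemma v_mem_T (k : Fin 5) : vB k ∈ Submodule.span ℂ Tset := by
  have m00 := Submodule.subset_span (R := ℂ) (q_mem 0 0)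
  have m11 := Submodule.subset_span (R := ℂ) (q_mem 1 1)
  have m22 := Submodule.subset_span (R := ℂ) (q_mem 2 2)
  have m01 := Submodule.subset_span (R := ℂ) (q_mem 0 1)
  have m02 := Submodule.subset_span (R := ℂ) (q_mem 0 2)
  fin_cases k
  · have h : vB 0 = (1/12 : ℂ) • (pderiv 0 (pderiv 0 Fq))
        - (1/12 : ℂ) • (pderiv 0 (pderiv 2 Fq)) := by rw [d00, d02]; module
    rw [show (⟨0, by omega⟩ : Fin 5) = 0 from rfl, h]
    exact sub_mem (Submodule.smul_mem _ _ m00) (Submodule.smul_mem _ _ m02)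
  · have h : vB 1 = (1/12 : ℂ) • (pderiv 1 (pderiv 1 Fq))
        - (1/12 : ℂ) • (pderiv 0 (pderiv 2 Fq)) := by rw [d11, d02]; module
    rw [show (⟨1, by omega⟩ : Fin 5) = 1 from rfl, h]
    exact sub_mem (Submodule.smul_mem _ _ m11) (Submodule.smul_mem _ _ m02)
  · have h : vB 2 = (1/12 : ℂ) • (pderiv 2 (pderiv 2 Fq))
        - (1/12 : ℂ) • (pderiv 0 (pderiv 2 Fq)) := by rw [d22, d02]; module
    rw [show (⟨2, by omega⟩ : Fin 5) = 2 from rfl, h]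
    exact sub_mem (Submodule.smul_mem _ _ m22) (Submodule.smul_mem _ _ m02)
  · have h : vB 3 = (-1/24 : ℂ) • (pderiv 0 (pderiv 0 Fq))
        + (-1/24 : ℂ) • (pderiv 1 (pderiv 1 Fq))
        + (-1/24 : ℂ) • (pderiv 2 (pderiv 2 Fq))
        + (7/48 : ℂ) • (pderiv 0 (pderiv 2 Fq)) := by
      rw [d00, d11, d22, d02]; module
    rw [show (⟨3, by omega⟩ : Fin 5) = 3 from rfl, h]
    exact add_mem (add_mem (add_mem (Submodule.smul_mem _ _ m00)
      (Submodule.smul_mem _ _ m11)) (Submodule.smul_mem _ _ m22))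
      (Submodule.smul_mem _ _ m02)
  · have h : vB 4 = (1/48 : ℂ) • (pderiv 0 (pderiv 1 Fq)) := by rw [d01]; module
    rw [show (⟨4, by omega⟩ : Fin 5) = 4 from rfl, h]
    exact Submodule.smul_mem _ _ m01

lemma vB_li : LinearIndependent ℂ vB := by
  rw [Fintype.linearIndependent_iff]
  intro g hg
  have h := fun (p : Fin 3 → ℂ) => congrArg (eval p) hg
  simp only [map_sum, smul_eval, Fin.sum_univ_five, map_zero] at h
  have h1 := h ![1, 0, 0]
  have h2 := h ![0, 1, 0]
  have h3 := h ![0, 0, 1]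
  have h4 := h ![1, 0, 1]
  have h5 := h ![1, 1, 0]
  simp at h1 h2 h3 h4 h5
  intro i
  fin_cases i
  · exact h1
  · exact h2
  · exact h3
  · show g 3 = 0
    linear_combination h4 - h1 - h3
  · show g 4 = 0
    linear_combination h5 - h1 - h2

lemma cata_eq : cataRank 2 Fq = 5 := by
  unfold cataRank
  show Module.finrank ℂ (Submodule.span ℂ Tset) = 5
  rw [le_antisymm spanT_le (by rw [Submodule.span_le]; rintro x ⟨k, rfl⟩; exact v_mem_T k),
    finrank_span_eq_card vB_li]
  simp


/-- the Clebsch quartic `x₀⁴ + x₁⁴ + x₂⁴ + (x₀+x₁+x₂)⁴ + (x₀−x₁+x₂)⁴` has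
middle catalecticant of rank exactly 5; in particular it does not have full rank 6. -/
theorem stmt_15 :
    cataRank 2
      ((X 0) ^ 4 + (X 1) ^ 4 + (X 2) ^ 4 + (X 0 + X 1 + X 2) ^ 4 + (X 0 - X 1 + X 2) ^ 4 :
        MvPolynomial (Fin 3) ℂ) = 5 ∧
    cataRank 2
      ((X 0) ^ 4 + (X 1) ^ 4 + (X 2) ^ 4 + (X 0 + X 1 + X 2) ^ 4 + (X 0 - X 1 + X 2) ^ 4 :
        MvPolynomial (Fin 3) ℂ) ≠ 6 := by 
  have h5 : cataRank 2
      ((X 0) ^ 4 + (X 1) ^ 4 + (X 2) ^ 4 + (X 0 + X 1 + X 2) ^ 4 + (X 0 - X 1 + X 2) ^ 4 :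
        MvPolynomial (Fin 3) ℂ) = 5 := cata_eq
  exact ⟨h5, by rw [h5]; norm_num⟩
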